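/- Let (X, D) be the amalgamation of a metric d along a finite clopen partition {B_i}_{i=1}^n with metrics e_i on B_i. If each (B_i, e_i) admits a bi-Lipschitz embedding into an ultrametric space (equivalently, is uniformly disconnected), then (X, D) is uniformly disconnected. -/
import Mathlib


open Set Topology

/-- `d` is a metric (as a two-variable real function) on the whole type `X`. -/
def IsMetricOn {X : Type*} (d : X → X → ℝ) : Prop :=
  (∀ x y, d x y = 0 ↔ x = y) ∧ (∀ x y, d x y = d y x) ∧ ∀ x y z, d x y ≤ d x z + d z y

/-- `d` is a metric on the subset `A` of `X`. -/
def IsMetricOnSet {X : Type*} (A : Set X) (d : X → X → ℝ) : Prop :=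
  (∀ x ∈ A, ∀ y ∈ A, (d x y = 0 ↔ x = y)) ∧ (∀ x ∈ A, ∀ y ∈ A, d x y = d y x) ∧
    ∀ x ∈ A, ∀ y ∈ A, ∀ z ∈ A, d x y ≤ d x z + d z y

/-- `d` is an ultrametric on the whole type `Y`. -/
def IsUltrametricOn {Y : Type*} (d : Y → Y → ℝ) : Prop :=
  (∀ x y, d x y = 0 ↔ x = y) ∧ (∀ x y, d x y = d y x) ∧
    ∀ x y z, d x y ≤ max (d x z) (d z y)

/-- `d` is uniformly disconnected: there is `δ ∈ (0,1)` such that for every finite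
chain `z 0, …, z N` with `z 0 ≠ z N`, one has `δ·d(z 0, z N) ≤ max_i d(z i, z (i+1))`. -/
def UniformlyDisconnected {X : Type*} (d : X → X → ℝ) : Prop :=
  ∃ δ : ℝ, 0 < δ ∧ δ < 1 ∧ ∀ (N : ℕ) (z : ℕ → X), 0 < N → z 0 ≠ z N →
    ∃ k < N, δ * d (z 0) (z N) ≤ d (z k) (z (k + 1))

/-- Chain bound for an ultrametric-like function: if all steps are at most `M`, then the
distance from the start to the end of the chain is at most `M`. -/
lemma ultra_chain_bound {Y : Type} (ρ : Y → Y → ℝ)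
    (h : ∀ x y z, ρ x y ≤ max (ρ x z) (ρ z y)) :
    ∀ (N : ℕ) (w : ℕ → Y) (M : ℝ), 0 < N → (∀ k < N, ρ (w k) (w (k + 1)) ≤ M) →
      ρ (w 0) (w N) ≤ M := by
  intro N
  induction N with
  | zero => intro w M hN _; omega
  | succ N ih =>
    intro w M hN hsteps
    rcases Nat.eq_zero_or_pos N with h0 | hN'
    · subst h0; exact hsteps 0 (by omega)
    · have h1 := ih w M hN' (fun k hk => hsteps k (by omega))
      have h2 := hsteps N (by omega)
      exact le_trans (h (w 0) (w (N + 1)) (w N)) (max_le h1 h2)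

/-- If every block of a finite amalgamation admits a bi-Lipschitz embedding into an
ultrametric space (i.e. is uniformly disconnected), then the amalgam is uniformly
disconnected. -/
theorem amalgamation_uniformlyDisconnected {X : Type*} [TopologicalSpace X] {n : ℕ}
    (d : X → X → ℝ) (hd : IsMetricOn d)
    (B : Fin n → Set X) (hBclopen : ∀ i, IsClopen (B i))
    (hBne : ∀ i, (B i).Nonempty)
    (hdisj : ∀ i j, i ≠ j → Disjoint (B i) (B j)) (hcover : ⋃ i, B i = univ)
    (p : Fin n → X) (hp : ∀ i, p i ∈ B i)
    (e : Fin n → (X → X → ℝ)) (he : ∀ i, IsMetricOnSet (B i) (e i))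
    (ι : X → Fin n) (hι : ∀ x, x ∈ B (ι x))
    (D : X → X → ℝ)
    (hDeq : ∀ x y, ι x = ι y → D x y = e (ι x) x y)
    (hDne : ∀ x y, ι x ≠ ι y →
      D x y = e (ι x) x (p (ι x)) + d (p (ι x)) (p (ι y)) + e (ι y) (p (ι y)) y)
    (hbilip : ∀ i, ∃ (Y : Type) (ρ : Y → Y → ℝ), IsUltrametricOn ρ ∧
      ∃ (f : X → Y) (L : ℝ), 1 ≤ L ∧ ∀ x ∈ B i, ∀ y ∈ B i,
        L⁻¹ * e i x y ≤ ρ (f x) (f y) ∧ ρ (f x) (f y) ≤ L * e i x y) :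
    UniformlyDisconnected D := by
  -- trivial case: no blocks
  rcases Nat.eq_zero_or_pos n with hn | hn
  · refine ⟨1/2, by norm_num, by norm_num, ?_⟩
    intro N z hN hne
    subst hn
    exact (ι (z 0)).elim0
  -- nonnegativity of d
  have dnn : ∀ x y, 0 ≤ d x y := by
    intro x y
    have h0 : d x x = 0 := (hd.1 x x).mpr rfl
    have h1 := hd.2.2 x x y
    have h2 := hd.2.1 y x
    linarith
  -- nonnegativity of each e i on B i
  have enn : ∀ i, ∀ x ∈ B i, ∀ y ∈ B i, 0 ≤ e i x y := by
    intro i x hx y hy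
    have h0 : e i x x = 0 := ((he i).1 x hx x hx).mpr rfl
    have h1 := (he i).2.2 x hx x hx y hy
    have h2 := (he i).2.1 y hy x hx
    linarith
  -- nonnegativity of D
  have Dnn : ∀ x y, 0 ≤ D x y := by
    intro x y
    by_cases h : ι x = ι y
    · rw [hDeq x y h]
      exact enn _ _ (hι x) _ (by rw [h]; exact hι y)
    · rw [hDne x y h]
      have h1 := enn _ _ (hι x) _ (hp (ι x))
      have h2 := dnn (p (ι x)) (p (ι y))
      have h3 := enn _ _ (hp (ι y)) _ (hι y)
      linarith
  -- symmetry of D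
  have Dsymm : ∀ x y, D x y = D y x := by
    intro x y
    by_cases h : ι x = ι y
    · rw [hDeq x y h, hDeq y x h.symm, h]
      exact (he (ι y)).2.1 x (by rw [← h]; exact hι x) y (hι y)
    · rw [hDne x y h, hDne y x (Ne.symm h)]
      rw [(he (ι x)).2.1 x (hι x) (p (ι x)) (hp _),
        (he (ι y)).2.1 (p (ι y)) (hp _) y (hι y), hd.2.1 (p (ι x)) (p (ι y))]
      ring
  -- per-block uniform disconnectedness constants
  have blockUD : ∀ i, ∃ δi : ℝ, 0 < δi ∧ δi ≤ 1 ∧ ∀ (N : ℕ) (z : ℕ → X),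
      (∀ k, z k ∈ B i) → 0 < N → ∀ M : ℝ, (∀ k < N, e i (z k) (z (k + 1)) ≤ M) →
      δi * e i (z 0) (z N) ≤ M := by
    intro i
    obtain ⟨Y, ρ, hρ, f, L, hL, hf⟩ := hbilip i
    have hL0 : (0 : ℝ) < L := lt_of_lt_of_le one_pos hL
    refine ⟨L⁻¹ * L⁻¹, by positivity, ?_, ?_⟩
    · have h1 : L⁻¹ ≤ 1 := by
        rw [inv_le_one_iff₀]; right; exact hL
      nlinarith [inv_nonneg.mpr hL0.le]
    · intro N z hz hN M hM
      have hM0 : 0 ≤ M := le_trans (enn i _ (hz 0) _ (hz 1)) (hM 0 hN)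
      have hρchain : ρ (f (z 0)) (f (z N)) ≤ L * M := by
        apply ultra_chain_bound ρ hρ.2.2 N (fun k => f (z k)) (L * M) hN
        intro k hk
        exact le_trans (hf _ (hz k) _ (hz (k + 1))).2
          (mul_le_mul_of_nonneg_left (hM k hk) hL0.le)
      have h1 := (hf _ (hz 0) _ (hz N)).1
      calc L⁻¹ * L⁻¹ * e i (z 0) (z N) = L⁻¹ * (L⁻¹ * e i (z 0) (z N)) := by ring
        _ ≤ L⁻¹ * (L * M) := mul_le_mul_of_nonneg_left (h1.trans hρchain) (by positivity)
        _ = M := by field_simp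
  choose δi hδipos hδile1 hud using blockUD
  -- global constants
  have hne' : Nonempty (Fin n) := ⟨⟨0, hn⟩⟩
  set δ : ℝ := Finset.univ.inf' Finset.univ_nonempty δi with hδdef
  have hδpos : 0 < δ := by
    rw [hδdef, Finset.lt_inf'_iff]
    exact fun i _ => hδipos i
  have hδle : ∀ i, δ ≤ δi i := fun i => Finset.inf'_le _ (Finset.mem_univ i)
  have hδ1 : δ ≤ 1 := le_trans (hδle ⟨0, hn⟩) (hδile1 _)
  have hpdist : ∀ i j : Fin n, i ≠ j → 0 < d (p i) (p j) := by
    intro i j hij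
    have hne'' : p i ≠ p j := fun h => (hdisj i j hij).ne_of_mem (hp i) (hp j) h
    exact lt_of_le_of_ne (dnn _ _) (fun h0 => hne'' ((hd.1 _ _).mp h0.symm))
  set S : Finset (Fin n × Fin n) := Finset.univ.offDiag with hSdef
  set c : ℝ := if hS : S.Nonempty then S.inf' hS (fun q => d (p q.1) (p q.2)) else 1 with hcdef
  set C : ℝ := if hS : S.Nonempty then S.sup' hS (fun q => d (p q.1) (p q.2)) else 1 with hCdef
  have hSmem : ∀ i j : Fin n, i ≠ j → (i, j) ∈ S := by
    intro i j hij
    rw [hSdef, Finset.mem_offDiag]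
    exact ⟨Finset.mem_univ _, Finset.mem_univ _, hij⟩
  have hc : 0 < c := by
    rw [hcdef]
    split_ifs with hS
    · rw [Finset.lt_inf'_iff]
      intro q hq
      rw [hSdef, Finset.mem_offDiag] at hq
      exact hpdist _ _ hq.2.2
    · norm_num
  have hC0 : 0 ≤ C := by
    rw [hCdef]
    split_ifs with hS
    · obtain ⟨q, hq⟩ := hS
      exact le_trans (dnn (p q.1) (p q.2)) (Finset.le_sup' (fun q => d (p q.1) (p q.2)) hq)
    · norm_num
  have hcle : ∀ i j : Fin n, i ≠ j → c ≤ d (p i) (p j) := by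
    intro i j hij
    have hS : S.Nonempty := ⟨(i, j), hSmem i j hij⟩
    rw [hcdef, dif_pos hS]
    exact Finset.inf'_le _ (hSmem i j hij)
  have hCge : ∀ i j : Fin n, i ≠ j → d (p i) (p j) ≤ C := by
    intro i j hij
    have hS : S.Nonempty := ⟨(i, j), hSmem i j hij⟩
    rw [hCdef, dif_pos hS]
    exact Finset.le_sup' (fun q => d (p q.1) (p q.2)) (hSmem i j hij)
  set K : ℝ := 2 * (δ⁻¹ + 1) + C / c with hKdef
  have hCc0 : 0 ≤ C / c := div_nonneg hC0 hc.le
  have hK : 0 < K := by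
    have h1 : 0 < δ⁻¹ := inv_pos.mpr hδpos
    rw [hKdef]; linarith
  set δ₀ : ℝ := min δ K⁻¹ / 2 with hδ₀def
  have hδ₀pos : 0 < δ₀ := by
    rw [hδ₀def]
    have := inv_pos.mpr hK
    positivity
  have hδ₀lt1 : δ₀ < 1 := by
    have h1 : min δ K⁻¹ ≤ δ := min_le_left _ _
    rw [hδ₀def]; linarith
  have hδ₀leδ : δ₀ ≤ δ := by
    have h1 : min δ K⁻¹ ≤ δ := min_le_left _ _
    rw [hδ₀def]; linarith [hδpos]
  have hδ₀le : ∀ i, δ₀ ≤ δi i := fun i => le_trans hδ₀leδ (hδle i)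
  have hδ₀K : δ₀ * K ≤ 1 := by
    have h1 : δ₀ ≤ K⁻¹ := by
      have := min_le_right δ K⁻¹
      have := inv_pos.mpr hK
      rw [hδ₀def]; linarith
    calc δ₀ * K ≤ K⁻¹ * K := mul_le_mul_of_nonneg_right h1 hK.le
      _ = 1 := inv_mul_cancel₀ hK.ne'
  -- key lemma: if the chain leaves the starting block, the distance from the start
  -- to its basepoint is controlled by the max step
  have key : ∀ (M : ℝ), 0 ≤ M → ∀ (N : ℕ) (z : ℕ → X), 0 < N →
      (∀ k < N, D (z k) (z (k + 1)) ≤ M) → (∃ k, k ≤ N ∧ ι (z k) ≠ ι (z 0)) →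
      e (ι (z 0)) (z 0) (p (ι (z 0))) ≤ (δ⁻¹ + 1) * M := by
    intro M hM0 N z hN hstep hex
    have hexP : ∃ k, ι (z k) ≠ ι (z 0) := hex.imp (fun k h => h.2)
    set k := Nat.find hexP with hkdef
    have hkspec : ι (z k) ≠ ι (z 0) := Nat.find_spec hexP
    have hkmin : ∀ l < k, ι (z l) = ι (z 0) := fun l hl =>
      not_ne_iff.mp (Nat.find_min hexP hl)
    have hk1 : 1 ≤ k := Nat.pos_of_ne_zero (fun h => hkspec (by rw [h]))
    have hkN : k ≤ N := by
      obtain ⟨k₁, hk₁, hne₁⟩ := hex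
      exact le_trans (Nat.find_min' hexP hne₁) hk₁
    set t := k - 1 with htdef
    have htk : t + 1 = k := by omega
    have htN : t < N := by omega
    have hιt : ι (z t) = ι (z 0) := hkmin t (by omega)
    have hzt : z t ∈ B (ι (z 0)) := by rw [← hιt]; exact hι (z t)
    have hne2 : ι (z t) ≠ ι (z (t + 1)) := by
      rw [hιt, htk]; exact fun h => hkspec h.symm
    -- the crossing step dominates e (z t) (p _)
    have h2 : e (ι (z 0)) (z t) (p (ι (z 0))) ≤ M := by
      have hDt := hDne (z t) (z (t + 1)) hne2
      rw [hιt] at hDt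
      have hd1 : 0 ≤ d (p (ι (z 0))) (p (ι (z (t + 1)))) := dnn _ _
      have he1 : 0 ≤ e (ι (z (t + 1))) (p (ι (z (t + 1)))) (z (t + 1)) :=
        enn _ _ (hp _) _ (hι _)
      have h3 := hstep t htN
      linarith
    -- in-block uniform disconnectedness dominates e (z 0) (z t)
    have h3 : e (ι (z 0)) (z 0) (z t) ≤ δ⁻¹ * M := by
      rcases Nat.eq_zero_or_pos t with h0 | ht0
      · rw [h0, ((he (ι (z 0))).1 _ (hι (z 0)) _ (hι (z 0))).mpr rfl]
        exact mul_nonneg (inv_nonneg.mpr hδpos.le) hM0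
      · have hchain : ∀ l, z (min l t) ∈ B (ι (z 0)) := by
          intro l
          have hl : min l t < k := Nat.lt_of_le_of_lt (Nat.min_le_right l t) (by omega)
          rw [← hkmin _ hl]; exact hι _
        have hsteps : ∀ l < t, e (ι (z 0)) (z (min l t)) (z (min (l + 1) t)) ≤ M := by
          intro l hl
          rw [Nat.min_eq_left hl.le, Nat.min_eq_left (by omega : l + 1 ≤ t)]
          have hll : ι (z l) = ι (z 0) := hkmin l (by omega)
          have hll1 : ι (z (l + 1)) = ι (z 0) := hkmin (l + 1) (by omega)
          have heq := hDeq (z l) (z (l + 1)) (hll.trans hll1.symm)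
          rw [hll] at heq
          rw [← heq]
          exact hstep l (by omega)
        have happ := hud (ι (z 0)) t (fun l => z (min l t)) hchain ht0 M hsteps
        simp only [Nat.zero_min, Nat.min_self] at happ
        have he0 : 0 ≤ e (ι (z 0)) (z 0) (z t) := enn _ _ (hι (z 0)) _ hzt
        have hδe : δ * e (ι (z 0)) (z 0) (z t) ≤ M :=
          le_trans (mul_le_mul_of_nonneg_right (hδle (ι (z 0))) he0) happ
        calc e (ι (z 0)) (z 0) (z t) = δ⁻¹ * (δ * e (ι (z 0)) (z 0) (z t)) := by
              field_simp
          _ ≤ δ⁻¹ * M := mul_le_mul_of_nonneg_left hδe (inv_nonneg.mpr hδpos.le)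
    have htri := (he (ι (z 0))).2.2 (z 0) (hι (z 0)) (p (ι (z 0))) (hp _) (z t) hzt
    linarith
  -- main argument
  refine ⟨δ₀, hδ₀pos, hδ₀lt1, ?_⟩
  intro N z hN hzne
  have hr0 : (0 : ℕ) ∈ Finset.range N := Finset.mem_range.mpr hN
  set M : ℝ := (Finset.range N).sup' ⟨0, hr0⟩ (fun k => D (z k) (z (k + 1))) with hMdef
  have hstep : ∀ k < N, D (z k) (z (k + 1)) ≤ M := fun k hk =>
    Finset.le_sup' (fun k => D (z k) (z (k + 1))) (Finset.mem_range.mpr hk)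
  have hM0 : 0 ≤ M := le_trans (Dnn _ _) (hstep 0 hN)
  obtain ⟨k₀, hk₀mem, hk₀⟩ := Finset.exists_mem_eq_sup' (⟨0, hr0⟩ :
    (Finset.range N).Nonempty) (fun k => D (z k) (z (k + 1)))
  refine ⟨k₀, Finset.mem_range.mp hk₀mem, ?_⟩
  have hMk : M = D (z k₀) (z (k₀ + 1)) := hk₀
  rw [← hMk]
  -- now show δ₀ * D (z 0) (z N) ≤ M
  by_cases hall : ∀ k ≤ N, ι (z k) = ι (z 0)
  · -- the whole chain stays in one block
    have hz0N : ι (z 0) = ι (z N) := (hall N le_rfl).symm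
    have hDe : D (z 0) (z N) = e (ι (z 0)) (z 0) (z N) := hDeq _ _ hz0N
    have hchain : ∀ l, z (min l N) ∈ B (ι (z 0)) := by
      intro l
      rw [← hall (min l N) (Nat.min_le_right l N)]; exact hι _
    have hsteps : ∀ l < N, e (ι (z 0)) (z (min l N)) (z (min (l + 1) N)) ≤ M := by
      intro l hl
      rw [Nat.min_eq_left hl.le, Nat.min_eq_left (by omega : l + 1 ≤ N)]
      have hll : ι (z l) = ι (z 0) := hall l (by omega)
      have hll1 : ι (z (l + 1)) = ι (z 0) := hall (l + 1) (by omega)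
      have heq := hDeq (z l) (z (l + 1)) (hll.trans hll1.symm)
      rw [hll] at heq
      rw [← heq]
      exact hstep l hl
    have happ := hud (ι (z 0)) N (fun l => z (min l N)) hchain hN M hsteps
    simp only [Nat.zero_min, Nat.min_self] at happ
    have he0 : 0 ≤ e (ι (z 0)) (z 0) (z N) :=
      enn _ _ (hι (z 0)) _ (by rw [hz0N]; exact hι (z N))
    rw [hDe]
    exact le_trans (mul_le_mul_of_nonneg_right (hδ₀le (ι (z 0))) he0) happ
  · -- the chain crosses blocks
    push_neg at hall
    obtain ⟨k₁, hk₁N, hk₁ne⟩ := hall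
    have hex1 : ∃ k, k ≤ N ∧ ι (z k) ≠ ι (z 0) := ⟨k₁, hk₁N, hk₁ne⟩
    have h1 := key M hM0 N z hN hstep hex1
    -- reversed chain
    set z' : ℕ → X := fun l => z (N - l) with hz'def
    have hz'0 : z' 0 = z N := by simp [hz'def]
    have hz'steps : ∀ k < N, D (z' k) (z' (k + 1)) ≤ M := by
      intro k hk
      have e1 : N - k = N - (k + 1) + 1 := by omega
      simp only [hz'def]
      rw [Dsymm, e1]
      exact hstep _ (by omega)
    have hz'ex : ∃ k, k ≤ N ∧ ι (z' k) ≠ ι (z' 0) := by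
      by_cases hm : ι (z N) = ι (z 0)
      · refine ⟨N - k₁, by omega, ?_⟩
        have e1 : N - (N - k₁) = k₁ := by omega
        simp only [hz'def, e1, Nat.sub_zero]
        rw [hm]
        exact hk₁ne
      · refine ⟨N, le_rfl, ?_⟩
        simp only [hz'def, Nat.sub_self, Nat.sub_zero]
        exact fun h => hm h.symm
    have h2 := key M hM0 N z' hN hz'steps hz'ex
    rw [hz'0] at h2
    -- crossing step gives c ≤ M
    have hexP : ∃ k, ι (z k) ≠ ι (z 0) := ⟨k₁, hk₁ne⟩
    have hMc : c ≤ M := by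
      set k := Nat.find hexP with hkdef
      have hkspec : ι (z k) ≠ ι (z 0) := Nat.find_spec hexP
      have hkmin : ∀ l < k, ι (z l) = ι (z 0) := fun l hl =>
        not_ne_iff.mp (Nat.find_min hexP hl)
      have hk1 : 1 ≤ k := Nat.pos_of_ne_zero (fun h => hkspec (by rw [h]))
      have hkN : k ≤ N := le_trans (Nat.find_min' hexP hk₁ne) hk₁N
      set t := k - 1 with htdef
      have htk : t + 1 = k := by omega
      have hιt : ι (z t) = ι (z 0) := hkmin t (by omega)
      have hne2 : ι (z t) ≠ ι (z (t + 1)) := by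
        rw [hιt, htk]; exact fun h => hkspec h.symm
      have hDt := hDne (z t) (z (t + 1)) hne2
      have hcd : c ≤ d (p (ι (z t))) (p (ι (z (t + 1)))) := hcle _ _ hne2
      have he1 : 0 ≤ e (ι (z t)) (z t) (p (ι (z t))) := enn _ _ (hι _) _ (hp _)
      have he2 : 0 ≤ e (ι (z (t + 1))) (p (ι (z (t + 1)))) (z (t + 1)) :=
        enn _ _ (hp _) _ (hι _)
      have h3 := hstep t (by omega)
      linarith
    -- bound D (z 0) (z N) by K * M
    have hDK : D (z 0) (z N) ≤ K * M := by
      have hCcM : C / c * c ≤ C / c * M := mul_le_mul_of_nonneg_left hMc hCc0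
      have hCc : C / c * c = C := div_mul_cancel₀ C hc.ne'
      by_cases hjm : ι (z 0) = ι (z N)
      · have hDe : D (z 0) (z N) = e (ι (z 0)) (z 0) (z N) := hDeq _ _ hjm
        have hzN : z N ∈ B (ι (z 0)) := by rw [hjm]; exact hι (z N)
        have htri := (he (ι (z 0))).2.2 (z 0) (hι (z 0)) (z N) hzN (p (ι (z 0))) (hp _)
        have hsym := (he (ι (z 0))).2.1 (p (ι (z 0))) (hp _) (z N) hzN
        have h2' : e (ι (z 0)) (z N) (p (ι (z 0))) ≤ (δ⁻¹ + 1) * M := by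
          rw [hjm]; exact h2
        have hKM : 0 ≤ C / c * M := mul_nonneg hCc0 hM0
        rw [hDe, hKdef]
        linarith
      · have hDe := hDne (z 0) (z N) hjm
        have hsym := (he (ι (z N))).2.1 (p (ι (z N))) (hp _) (z N) (hι _)
        have hdC : d (p (ι (z 0))) (p (ι (z N))) ≤ C := hCge _ _ hjm
        rw [hDe, hKdef]
        linarith
    -- conclude
    have hfin1 : δ₀ * D (z 0) (z N) ≤ δ₀ * (K * M) :=
      mul_le_mul_of_nonneg_left hDK hδ₀pos.le
    have hfin2 : δ₀ * K * M ≤ 1 * M := mul_le_mul_of_nonneg_right hδ₀K hM0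
    nlinarith
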